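/- arXiv:1906.00914 — 4 statements merged into one kernel-verified Lean document; each statement's English description precedes it below -/
import Mathlib

section
/- Let V be a nonempty finite set and F a field with char(F) = 0 or char(F) > |V|. Then every coherent algebra on V over F is semisimple as a ring with respect to matrix multiplication. -/
open Classical Matrix

noncomputable section

/-- `k`-tuples of elements of `V`. -/
abbrev Tup (V : Type) (k : ℕ) := Fin k → V

variable {V : Type}

/-- `v⟨i,x⟩` : the tuple obtained from `v` by substituting, for each `s`,
the entry of `v` in position `i s` by `x s`. -/
def substTup {k r : ℕ} (v : Tup V k) (i : Fin r → Fin k) (x : Tup V r) : Tup V k :=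
  fun j => if h : ∃ s, i s = j then x h.choose else v j

/-- `pr_j v = (v_{j 1}, …, v_{j r})`. -/
def prTup {k r : ℕ} (j : Fin r → Fin k) (v : Tup V k) : Tup V r := fun s => v (j s)

/-- `(w_1, …, w_r, w_r, …, w_r) : V^k`. -/
def extendTup [Nonempty V] {r : ℕ} (k : ℕ) (w : Tup V r) : Tup V k := fun i =>
  if h : (i : ℕ) < r then w ⟨i, h⟩
  else if h' : 0 < r then w ⟨r - 1, by omega⟩
  else Classical.arbitrary V

/-- The `r`-projection `pr_r γ` of a labelled partition (presented as a setoid) of `V^k`. -/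
def prPart [Nonempty V] {k : ℕ} (r : ℕ) (γ : Setoid (Tup V k)) : Setoid (Tup V r) where
  r w w' := γ.r (extendTup k w) (extendTup k w')
  iseqv := ⟨fun _ => γ.iseqv.refl _, fun h => γ.iseqv.symm h, fun h h' => γ.iseqv.trans h h'⟩

/-- `v^τ`, the tuple with `i`-th entry `v (τ⁻¹ i)`. -/
def permTup {k : ℕ} (τ : Equiv.Perm (Fin k)) (v : Tup V k) : Tup V k := fun i => v (τ.symm i)

/-- `γ ⪯ ρ` : the partition `ρ` refines the partition `γ`. -/
def Refines {A : Type*} (γ ρ : Setoid A) : Prop := ∀ u v : A, ρ.r u v → γ.r u v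

/-- `γ ≈ ρ` : the partitions mutually refine each other. -/
def PartEquiv {A : Type*} (γ ρ : Setoid A) : Prop := Refines γ ρ ∧ Refines ρ γ

/-- Invariance of a partition of `V^k` under `Sym(k)`. -/
def Invariant {k : ℕ} (γ : Setoid (Tup V k)) : Prop :=
  ∀ u v : Tup V k, γ.r u v → ∀ τ : Equiv.Perm (Fin k), γ.r (permTup τ u) (permTup τ v)

/-- `r`-consistency of a partition of `V^k`. -/
def Consistent [Nonempty V] {k : ℕ} (r : ℕ) (γ : Setoid (Tup V k)) : Prop :=
  ∀ u v : Tup V k, γ.r u v → ∀ j : Fin r → Fin k,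
    (prPart r γ).r (prTup j u) (prTup j v)

/-- Graph-like partitions of `V^k`. -/
def GraphLike [Nonempty V] {k : ℕ} (γ : Setoid (Tup V k)) : Prop :=
  Invariant γ ∧ (∀ r ≤ k, Consistent r γ) ∧
    ∀ u v : Tup V k, γ.r u v → ∀ i j : Fin k, u i = u j → v i = v j

/-- `{x ∈ V^r : γ(u⟨i,x⟩) = φ_i for all i ∈ [k]^(r)}`, where the colour tuple `φ` is
given by representatives. -/
def WLSet {k r : ℕ} (γ : Setoid (Tup V k)) (u : Tup V k)
    (φ : (Fin r → Fin k) → Tup V k) : Set (Tup V r) :=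
  {x | ∀ i : Fin r → Fin k, Function.Injective i → γ.r (substTup u i x) (φ i)}

/-- `{x ∈ V^r : γ(u⟨i,x⟩) = σ}`, where the colour `σ` is given by a representative `w`. -/
def CSet {k r : ℕ} (γ : Setoid (Tup V k)) (u : Tup V k)
    (i : Fin r → Fin k) (w : Tup V k) : Set (Tup V r) :=
  {x | γ.r (substTup u i x) w}

/-- `WL_{k,r}`-stability of a partition of `V^k`. -/
def WLStable {k : ℕ} (r : ℕ) (γ : Setoid (Tup V k)) : Prop :=
  r < k → ∀ u v : Tup V k, γ.r u v →
    ∀ φ : (Fin r → Fin k) → Tup V k, (WLSet γ u φ).ncard = (WLSet γ v φ).ncard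

/-- `C_{k,r}`-stability of a partition of `V^k`. -/
def CStable {k : ℕ} (r : ℕ) (γ : Setoid (Tup V k)) : Prop :=
  r < k → ∀ u v : Tup V k, γ.r u v →
    ∀ i : Fin r → Fin k, Function.Injective i → ∀ w : Tup V k,
      (CSet γ u i w).ncard = (CSet γ v i w).ncard

/-- The matrix `χ^{γ,v}_{i,σ}`, with the colour `σ` given by a representative `w`. -/
def chiMat (F : Type) [Field F] {k : ℕ} (γ : Setoid (Tup V k)) (v : Tup V k)
    (i : Fin 2 → Fin k) (w : Tup V k) : Matrix V V F :=
  Matrix.of fun x y => if γ.r (substTup v i ![x, y]) w then (1 : F) else 0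

/-- The matrix `χ^{γ,v}_φ`, with the colour tuple `φ` given by representatives. -/
def chiMatT (F : Type) [Field F] {k : ℕ} (γ : Setoid (Tup V k)) (v : Tup V k)
    (φ : (Fin 2 → Fin k) → Tup V k) : Matrix V V F :=
  Matrix.of fun x y =>
    if ∀ i : Fin 2 → Fin k, Function.Injective i → γ.r (substTup v i ![x, y]) (φ i)
    then (1 : F) else 0

/-- `IM_k^F`-stability of a partition of `V^k`. -/
def IMStable (F : Type) [Field F] [Fintype V] [DecidableEq V] {k : ℕ}
    (γ : Setoid (Tup V k)) : Prop :=
  2 < k → ∀ u v : Tup V k, γ.r u v →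
    ∀ i : Fin 2 → Fin k, Function.Injective i →
      ∃ S : (Matrix V V F)ˣ, ∀ w : Tup V k,
        (S : Matrix V V F) * chiMat F γ u i w * ((S⁻¹ : (Matrix V V F)ˣ) : Matrix V V F)
          = chiMat F γ v i w

/-- `IMt_k^F`-stability of a partition of `V^k`. -/
def IMtStable (F : Type) [Field F] [Fintype V] [DecidableEq V] {k : ℕ}
    (γ : Setoid (Tup V k)) : Prop :=
  2 < k → ∀ u v : Tup V k, γ.r u v →
    ∃ S : (Matrix V V F)ˣ, ∀ φ : (Fin 2 → Fin k) → Tup V k,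
      (S : Matrix V V F) * chiMatT F γ u φ * ((S⁻¹ : (Matrix V V F)ˣ) : Matrix V V F)
        = chiMatT F γ v φ

/-- The refinement operator `WL_{k,r}`. -/
def WLop {k : ℕ} (r : ℕ) (γ : Setoid (Tup V k)) : Setoid (Tup V k) :=
  if r < k then
    { r := fun u v => γ.r u v ∧ ∀ φ : (Fin r → Fin k) → Tup V k,
        (WLSet γ u φ).ncard = (WLSet γ v φ).ncard
      iseqv := by
        refine ⟨fun u => ⟨γ.iseqv.refl u, fun _ => rfl⟩, ?_, ?_⟩
        · rintro u v ⟨h1, h2⟩; exact ⟨γ.iseqv.symm h1, fun φ => (h2 φ).symm⟩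
        · rintro u v w ⟨h1, h2⟩ ⟨h1', h2'⟩
          exact ⟨γ.iseqv.trans h1 h1', fun φ => (h2 φ).trans (h2' φ)⟩ }
  else γ

/-- The refinement operator `C_{k,r}`. -/
def Cop {k : ℕ} (r : ℕ) (γ : Setoid (Tup V k)) : Setoid (Tup V k) :=
  if r < k then
    { r := fun u v => γ.r u v ∧ ∀ i : Fin r → Fin k, Function.Injective i →
        ∀ w : Tup V k, (CSet γ u i w).ncard = (CSet γ v i w).ncard
      iseqv := by
        refine ⟨fun u => ⟨γ.iseqv.refl u, fun _ _ _ => rfl⟩, ?_, ?_⟩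
        · rintro u v ⟨h1, h2⟩; exact ⟨γ.iseqv.symm h1, fun i hi w => (h2 i hi w).symm⟩
        · rintro u v w ⟨h1, h2⟩ ⟨h1', h2'⟩
          exact ⟨γ.iseqv.trans h1 h1', fun i hi x => (h2 i hi x).trans (h2' i hi x)⟩ }
  else γ


theorem conjRefl {M : Type*} [Monoid M] (A : M) :
    ((1 : Mˣ) : M) * A * (((1 : Mˣ)⁻¹ : Mˣ) : M) = A := by simp

theorem conjSymm {M : Type*} [Monoid M] (S : Mˣ) {A B : M}
    (h : (S : M) * A * ((S⁻¹ : Mˣ) : M) = B) :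
    ((S⁻¹ : Mˣ) : M) * B * (((S⁻¹)⁻¹ : Mˣ) : M) = A := by
  subst h
  rw [inv_inv]
  simp [mul_assoc, Units.inv_mul_cancel_left, Units.inv_mul]

theorem conjTrans {M : Type*} [Monoid M] (S T : Mˣ) {A B C : M}
    (h1 : (S : M) * A * ((S⁻¹ : Mˣ) : M) = B)
    (h2 : (T : M) * B * ((T⁻¹ : Mˣ) : M) = C) :
    ((T * S : Mˣ) : M) * A * (((T * S)⁻¹ : Mˣ) : M) = C := by
  subst h1; subst h2
  simp [Units.val_mul, _root_.mul_inv_rev, mul_assoc]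

/-- The refinement operator `IM_k^F`. -/
def IMop (F : Type) [Field F] [Fintype V] [DecidableEq V] {k : ℕ}
    (γ : Setoid (Tup V k)) : Setoid (Tup V k) :=
  if 2 < k then
    { r := fun u v => γ.r u v ∧ ∀ i : Fin 2 → Fin k, Function.Injective i →
        ∃ S : (Matrix V V F)ˣ, ∀ w : Tup V k,
          (S : Matrix V V F) * chiMat F γ u i w * ((S⁻¹ : (Matrix V V F)ˣ) : Matrix V V F)
            = chiMat F γ v i w
      iseqv := by
        refine ⟨fun u => ⟨γ.iseqv.refl u, fun i _ => ⟨1, fun w => conjRefl _⟩⟩, ?_, ?_⟩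
        · rintro u v ⟨h1, h2⟩
          refine ⟨γ.iseqv.symm h1, fun i hi => ?_⟩
          obtain ⟨S, hS⟩ := h2 i hi
          exact ⟨S⁻¹, fun w => conjSymm S (hS w)⟩
        · rintro u v w ⟨h1, h2⟩ ⟨h1', h2'⟩
          refine ⟨γ.iseqv.trans h1 h1', fun i hi => ?_⟩
          obtain ⟨S, hS⟩ := h2 i hi
          obtain ⟨T, hT⟩ := h2' i hi
          exact ⟨T * S, fun x => conjTrans S T (hS x) (hT x)⟩ }
  else γ

/-- The refinement operator `IMt_k^F`. -/
def IMtop (F : Type) [Field F] [Fintype V] [DecidableEq V] {k : ℕ}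
    (γ : Setoid (Tup V k)) : Setoid (Tup V k) :=
  if 2 < k then
    { r := fun u v => γ.r u v ∧
        ∃ S : (Matrix V V F)ˣ, ∀ φ : (Fin 2 → Fin k) → Tup V k,
          (S : Matrix V V F) * chiMatT F γ u φ * ((S⁻¹ : (Matrix V V F)ˣ) : Matrix V V F)
            = chiMatT F γ v φ
      iseqv := by
        refine ⟨fun u => ⟨γ.iseqv.refl u, ⟨1, fun φ => conjRefl _⟩⟩, ?_, ?_⟩
        · rintro u v ⟨h1, ⟨S, hS⟩⟩
          exact ⟨γ.iseqv.symm h1, ⟨S⁻¹, fun φ => conjSymm S (hS φ)⟩⟩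
        · rintro u v w ⟨h1, ⟨S, hS⟩⟩ ⟨h1', ⟨T, hT⟩⟩
          exact ⟨γ.iseqv.trans h1 h1', ⟨T * S, fun φ => conjTrans S T (hS φ) (hT φ)⟩⟩ }
  else γ

/-- Iterate a refinement operator `|V|^k` times, reaching its stable fixed point. -/
def stabilize [Fintype V] {k : ℕ} (R : Setoid (Tup V k) → Setoid (Tup V k))
    (γ : Setoid (Tup V k)) : Setoid (Tup V k) :=
  R^[Fintype.card V ^ k] γ

/-- A graph on `V` : a labelled partition of `V²` that is a rainbow. -/
def IsGraph (Γ : Setoid (Tup V 2)) : Prop :=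
  (∀ u x y : V, Γ.r ![u, u] ![x, y] → x = y) ∧
  (∀ u v u' v' : V, Γ.r ![u, v] ![u', v'] ↔ Γ.r ![v, u] ![v', u'])

/-- The atomic-type partition `α_{k,Γ}` of `V^k` determined by a graph `Γ`. -/
def atomicPart {k : ℕ} (Γ : Setoid (Tup V 2)) : Setoid (Tup V k) where
  r u v := ∀ i j : Fin k, i ≠ j → Γ.r ![u i, u j] ![v i, v j]
  iseqv := ⟨fun _ _ _ _ => Γ.iseqv.refl _, fun h i j hij => Γ.iseqv.symm (h i j hij),
    fun h h' i j hij => Γ.iseqv.trans (h i j hij) (h' i j hij)⟩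

/-- `WL̄_{k,r}(Γ)`. -/
def WLbarR [Nonempty V] [Fintype V] (k r : ℕ) (Γ : Setoid (Tup V 2)) : Setoid (Tup V 2) :=
  if k ≤ 1 then Γ else prPart 2 (stabilize (WLop (k := k) r) (atomicPart Γ))

/-- `C̄_{k,r}(Γ)`. -/
def CbarR [Nonempty V] [Fintype V] (k r : ℕ) (Γ : Setoid (Tup V 2)) : Setoid (Tup V 2) :=
  if k ≤ 1 then Γ else prPart 2 (stabilize (Cop (k := k) r) (atomicPart Γ))

/-- `WL̄_k(Γ) = WL̄_{k,1}(Γ)`. -/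
def WLbar [Nonempty V] [Fintype V] (k : ℕ) (Γ : Setoid (Tup V 2)) : Setoid (Tup V 2) :=
  WLbarR k 1 Γ

/-- `C̄_k(Γ) = C̄_{k,1}(Γ)`. -/
def Cbar [Nonempty V] [Fintype V] (k : ℕ) (Γ : Setoid (Tup V 2)) : Setoid (Tup V 2) :=
  CbarR k 1 Γ

/-- `IM̄_k^F(Γ)`. -/
def IMbar (F : Type) [Field F] [Nonempty V] [Fintype V] [DecidableEq V]
    (k : ℕ) (Γ : Setoid (Tup V 2)) : Setoid (Tup V 2) :=
  if k ≤ 1 then Γ else prPart 2 (stabilize (IMop (k := k) F) (atomicPart Γ))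

/-- `IMt̄_k^F(Γ)`. -/
def IMtbar (F : Type) [Field F] [Nonempty V] [Fintype V] [DecidableEq V]
    (k : ℕ) (Γ : Setoid (Tup V 2)) : Setoid (Tup V 2) :=
  if k ≤ 1 then Γ else prPart 2 (stabilize (IMtop (k := k) F) (atomicPart Γ))

/-- A nonempty finite set together with a graph on it. -/
structure FinGraph where
  V : Type
  [instFintype : Fintype V]
  [instDecEq : DecidableEq V]
  [instNonempty : Nonempty V]
  Γ : Setoid (Tup V 2)
  isGraph : IsGraph Γ

attribute [instance] FinGraph.instFintype FinGraph.instDecEq FinGraph.instNonempty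

/-- A 0-1 matrix. -/
def Is01 {F : Type} [Field F] (A : Matrix V V F) : Prop :=
  ∀ x y : V, A x y = 0 ∨ A x y = 1

/-- The coherence conditions on a (finite) set of 0-1 matrices. -/
def CoherenceConds (F : Type) [Field F] [Fintype V] [DecidableEq V]
    (M : Finset (Matrix V V F)) : Prop :=
  (∑ A ∈ M, A) = Matrix.of (fun _ _ => (1 : F)) ∧
  (∃ N ⊆ M, (∑ A ∈ N, A) = (1 : Matrix V V F)) ∧
  (∀ A ∈ M, Aᵀ ∈ M)

/-- A coherent algebra on `V` over `F` : a unital subalgebra of `Mat_V(F)` containing the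
all-ones matrix `J`, closed under the Schur–Hadamard product and under transposition. -/
structure IsCoherentAlgebra (F : Type) [Field F] [Fintype V] [DecidableEq V]
    (W : Subalgebra F (Matrix V V F)) : Prop where
  allOnes_mem : Matrix.of (fun _ _ => (1 : F)) ∈ W
  hadamard_mem : ∀ A B : Matrix V V F, A ∈ W → B ∈ W → A ⊙ B ∈ W
  transpose_mem : ∀ A : Matrix V V F, A ∈ W → Aᵀ ∈ W

set_option linter.unusedSectionVars false


section Part2

variable {F : Type} [Field F] {R : Type} [Ring R] [Algebra F R] [FiniteDimensional F R]

/-- dimension of a left ideal as an F-space -/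
private noncomputable def dd (F : Type) [Field F] {R : Type} [Ring R] [Algebra F R]
    (I : Submodule R R) : ℕ :=
  Module.finrank F (I.restrictScalars F)

private lemma dd_lt_of_lt {I J : Submodule R R} (h : I < J) : dd F I < dd F J := by
  apply Submodule.finrank_lt_finrank_of_lt
  refine lt_of_le_of_ne ?_ ?_
  · intro x hx; exact ((Submodule.restrictScalars_mem F J x).mpr (h.le
      ((Submodule.restrictScalars_mem F I x).mp hx)))
  · intro hEq; exact h.ne (Submodule.restrictScalars_injective F R R hEq)

private lemma dd_le_of_le {I J : Submodule R R} (h : I ≤ J) : dd F I ≤ dd F J := by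
  rcases lt_or_eq_of_le h with h | h
  · exact (dd_lt_of_lt h).le
  · rw [h]

private lemma eq_of_le_of_dd_le {I J : Submodule R R} (h : I ≤ J) (hd : dd F J ≤ dd F I) :
    I = J := by
  apply Submodule.restrictScalars_injective F R R
  apply Submodule.eq_of_le_of_finrank_le
  · intro x hx; exact ((Submodule.restrictScalars_mem F J x).mpr (h
      ((Submodule.restrictScalars_mem F I x).mp hx)))
  · exact hd

variable (τ : R → F)

/-- Brauer's lemma step: a minimal nonzero left ideal is generated by an idempotent. -/
private lemma brauer
    (H1 : ∀ a : R, a ≠ 0 → ∃ b : R, τ (a * b) ≠ 0)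
    (H2 : ∀ a : R, a * a = 0 → τ a = 0)
    (L : Submodule R R) (hL : L ≠ ⊥)
    (hmin : ∀ L' : Submodule R R, L' ≤ L → L' ≠ ⊥ → L' = L) :
    ∃ e : R, e ∈ L ∧ e * e = e ∧ e ≠ 0 ∧ L = Submodule.span R {e} := by
  -- first, there exist a b in L with b * a ≠ 0
  have hab : ∃ a ∈ L, ∃ b ∈ L, b * a ≠ 0 := by
    by_contra hz
    push_neg at hz
    obtain ⟨a, haL, ha0⟩ := Submodule.exists_mem_ne_zero_of_ne_bot hL
    obtain ⟨c, hc⟩ := H1 a ha0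
    apply hc
    apply H2
    have hca : c * a ∈ L := L.smul_mem c haL
    have h0 : a * (c * a) = 0 := hz _ hca _ haL
    calc a * c * (a * c) = a * (c * a) * c := by noncomm_ring
    _ = 0 := by rw [h0, zero_mul]
  obtain ⟨a, haL, b, hbL, hba⟩ := hab
  have ha0 : a ≠ 0 := fun h => hba (by rw [h, mul_zero])
  -- L * a = L
  set ρ : R →ₗ[R] R := LinearMap.toSpanSingleton R R a with hρ
  have hLa_le : L.map ρ ≤ L := by
    rintro _ ⟨x, hx, rfl⟩
    exact L.smul_mem x haL
  have hLa_ne : L.map ρ ≠ ⊥ := by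
    intro h
    apply hba
    have : b • a ∈ L.map ρ := ⟨b, hbL, rfl⟩
    rw [h] at this
    simpa using this
  have hLa : L.map ρ = L := hmin _ hLa_le hLa_ne
  have haa : a ∈ L.map ρ := by rw [hLa]; exact haL
  obtain ⟨e, heL, hea⟩ := haa
  have hea : e * a = a := hea
  -- T = ⊥
  set T : Submodule R R := L ⊓ LinearMap.ker ρ with hT
  have hTne : T ≠ L := by
    intro h
    have : e ∈ T := h ▸ heL
    have : e • a = 0 := this.2
    rw [smul_eq_mul, hea] at this
    exact ha0 this
  have hTbot : T = ⊥ := by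
    by_contra h
    exact hTne (hmin T inf_le_left h)
  -- e is idempotent
  have hidem : e * e = e := by
    have hmem : e * e - e ∈ T := by
      constructor
      · exact Submodule.sub_mem L (L.smul_mem e heL) heL
      · show (e * e - e) • a = 0
        rw [smul_eq_mul, sub_mul, mul_assoc, hea, hea, sub_self]
    rw [hTbot] at hmem
    simpa [sub_eq_zero] using hmem
  have he0 : e ≠ 0 := by
    intro h; rw [h, zero_mul] at hea; exact ha0 hea.symm
  refine ⟨e, heL, hidem, he0, ?_⟩
  refine (hmin _ ?_ ?_).symm
  · rw [Submodule.span_le, Set.singleton_subset_iff]; exact heL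
  · intro h
    have : e ∈ Submodule.span R {e} := Submodule.mem_span_singleton_self e
    rw [h] at this
    exact he0 (by simpa using this)

private lemma exists_gen
    (H1 : ∀ a : R, a ≠ 0 → ∃ b : R, τ (a * b) ≠ 0)
    (H2 : ∀ a : R, a * a = 0 → τ a = 0) :
    ∀ (n : ℕ) (I : Submodule R R), dd F I ≤ n →
      ∃ f : R, f * f = f ∧ I = Submodule.span R {f} := by
  intro n
  induction n with
  | zero =>
    intro I hI
    have h0 : Module.finrank F (I.restrictScalars F) = 0 := Nat.le_zero.mp hI
    have hbot : I.restrictScalars F = ⊥ := Submodule.finrank_eq_zero.mp h0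
    have hIbot : I = ⊥ := by rwa [Submodule.restrictScalars_eq_bot_iff] at hbot
    exact ⟨0, by rw [mul_zero], by rw [hIbot, Submodule.span_zero_singleton]⟩
  | succ n ih =>
    intro I hI
    by_cases hIbot : I = ⊥
    · exact ⟨0, by rw [mul_zero], by rw [hIbot, Submodule.span_zero_singleton]⟩
    -- find a minimal nonzero subideal of I
    have hex : ∃ m : ℕ, ∃ L : Submodule R R, L ≤ I ∧ L ≠ ⊥ ∧ dd F L = m :=
      ⟨dd F I, I, le_rfl, hIbot, rfl⟩
    classical
    obtain ⟨L, hLI, hLne, hLm⟩ := Nat.find_spec hex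
    have hmin : ∀ L' : Submodule R R, L' ≤ L → L' ≠ ⊥ → L' = L := by
      intro L' hle hne
      have h1 : Nat.find hex ≤ dd F L' :=
        Nat.find_min' hex ⟨L', hle.trans hLI, hne, rfl⟩
      exact eq_of_le_of_dd_le hle (by rw [hLm]; exact h1)
    obtain ⟨e, heL, hee, he0, _⟩ := brauer τ H1 H2 L hLne hmin
    have heI : e ∈ I := hLI heL
    -- I' = I ⊓ ker (· * e)
    set ρ : R →ₗ[R] R := LinearMap.toSpanSingleton R R e with hρ
    set I' : Submodule R R := I ⊓ LinearMap.ker ρ with hI'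
    have hI'lt : I' < I := by
      refine lt_of_le_of_ne inf_le_left ?_
      intro h
      have : e ∈ I' := h.symm ▸ heI
      have : e • e = 0 := this.2
      rw [smul_eq_mul, hee] at this
      exact he0 this
    have hdd : dd F I' ≤ n := by
      have := dd_lt_of_lt (F := F) hI'lt
      omega
    obtain ⟨e', he'idem, hspan⟩ := ih I' hdd
    have he'I' : e' ∈ I' := by
      rw [hspan]; exact Submodule.mem_span_singleton_self e'
    have he'I : e' ∈ I := he'I'.1
    have he'e : e' * e = 0 := by
      have : e' • e = 0 := he'I'.2
      rwa [smul_eq_mul] at this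
    -- the combined idempotent
    set f : R := e + e' - e * e' with hf
    have t1 : f * e = e := by
      rw [hf, sub_mul, add_mul, mul_assoc, he'e, hee, mul_zero, sub_zero, add_zero]
    have t2 : f * e' = e' := by
      rw [hf, sub_mul, add_mul, he'idem, mul_assoc, he'idem]
      abel
    have t3 : f * (e * e') = e * e' := by
      rw [← mul_assoc, t1]
    have hff : f * f = f := by
      nth_rewrite 2 [hf]
      rw [mul_sub, mul_add, t1, t2, t3, ← hf]
    refine ⟨f, hff, ?_⟩
    have hfI : f ∈ I := by
      refine Submodule.sub_mem I (Submodule.add_mem I heI he'I) ?_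
      exact I.smul_mem e he'I
    apply le_antisymm
    · intro x hx
      rw [Submodule.mem_span_singleton]
      refine ⟨x, ?_⟩
      rw [smul_eq_mul]
      have hyI' : x - x * e ∈ I' := by
        constructor
        · exact Submodule.sub_mem I hx (I.smul_mem x heI)
        · show (x - x * e) • e = 0
          rw [smul_eq_mul, sub_mul, mul_assoc, hee, sub_self]
      have hy' : (x - x * e) * e' = x - x * e := by
        have := hspan ▸ hyI'
        rw [Submodule.mem_span_singleton] at this
        obtain ⟨r, hr⟩ := this
        rw [← hr, smul_eq_mul, mul_assoc, he'idem]
      have h2 : x * e' - x * e * e' = x - x * e := by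
        rw [← hy', sub_mul, mul_assoc]
      calc x * f = x * e + x * e' - x * (e * e') := by rw [hf, mul_sub, mul_add]
        _ = x * e + (x * e' - x * e * e') := by rw [mul_assoc]; abel
        _ = x * e + (x - x * e) := by rw [h2]
        _ = x := by abel
    · intro x hx
      rw [Submodule.mem_span_singleton] at hx
      obtain ⟨r, hr⟩ := hx
      rw [← hr, smul_eq_mul]
      exact I.smul_mem r hfI

theorem semisimple_of_trace
    (H1 : ∀ a : R, a ≠ 0 → ∃ b : R, τ (a * b) ≠ 0)
    (H2 : ∀ a : R, a * a = 0 → τ a = 0) :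
    IsSemisimpleRing R := by
  refine (isSemisimpleModule_iff R R).mpr ⟨?_⟩
  intro I
  obtain ⟨f, hff, hIf⟩ := exists_gen τ H1 H2 (dd F I) I le_rfl
  refine ⟨LinearMap.ker (LinearMap.toSpanSingleton R R f), ?_, ?_⟩
  · rw [Submodule.disjoint_def]
    intro x hxI hxk
    rw [hIf, Submodule.mem_span_singleton] at hxI
    obtain ⟨r, hr⟩ := hxI
    have hx0 : x • f = 0 := hxk
    rw [smul_eq_mul] at hx0
    rw [← hr, smul_eq_mul] at hx0 ⊢
    rw [mul_assoc, hff] at hx0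
    exact hx0
  · rw [codisjoint_iff, eq_top_iff]
    intro x _
    refine Submodule.mem_sup.mpr ⟨x * f, ?_, x - x * f, ?_, by abel⟩
    · rw [hIf]
      rw [Submodule.mem_span_singleton]
      exact ⟨x, rfl⟩
    · show (x - x * f) • f = 0
      rw [smul_eq_mul, sub_mul, mul_assoc, hff, sub_self]

end Part2

section Part1

variable [Fintype V] [DecidableEq V] {F : Type} [Field F]
variable {W : Subalgebra F (Matrix V V F)}

lemma hadPow_mem (hW : IsCoherentAlgebra F W) {A : Matrix V V F} (hA : A ∈ W) (k : ℕ) :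
    Matrix.of (fun x y => (A x y) ^ k) ∈ W := by
  induction k with
  | zero => simpa using hW.allOnes_mem
  | succ k ih =>
    have h2 := hW.hadamard_mem _ _ ih hA
    have hEq : (Matrix.of (fun x y => (A x y) ^ k) ⊙ A)
        = Matrix.of (fun x y => (A x y) ^ (k + 1)) := by
      ext x y
      simp [Matrix.hadamard, pow_succ]
    rwa [hEq] at h2

lemma evalMat_mem (hW : IsCoherentAlgebra F W) {A : Matrix V V F} (hA : A ∈ W)
    (p : Polynomial F) : Matrix.of (fun x y => p.eval (A x y)) ∈ W := by
  induction p using Polynomial.induction_on' with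
  | add p q hp hq =>
    have h2 := W.add_mem hp hq
    have hEq : (Matrix.of (fun x y => Polynomial.eval (A x y) p)
        + Matrix.of (fun x y => Polynomial.eval (A x y) q))
        = Matrix.of (fun x y => Polynomial.eval (A x y) (p + q)) := by
      ext x y; simp
    rwa [hEq] at h2
  | monomial n a =>
    have h2 := W.smul_mem (hadPow_mem hW hA n) a
    have hEq : a • Matrix.of (fun x y => (A x y) ^ n)
        = Matrix.of (fun x y => Polynomial.eval (A x y) (Polynomial.monomial n a)) := by
      ext x y; simp [Polynomial.eval_monomial]
    rwa [hEq] at h2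

lemma funcMat_mem [Nonempty V] (hW : IsCoherentAlgebra F W) {A : Matrix V V F} (hA : A ∈ W)
    (f : F → F) : Matrix.of (fun x y => f (A x y)) ∈ W := by
  set s : Finset F := Finset.image (fun q : V × V => A q.1 q.2) Finset.univ with hs
  have heval : ∀ x y : V, (Lagrange.interpolate s id f).eval (A x y) = f (A x y) := by
    intro x y
    have hmem : A x y ∈ s := Finset.mem_image.mpr ⟨(x, y), Finset.mem_univ _, rfl⟩
    exact Lagrange.eval_interpolate_at_node f (Set.injOn_id _) hmem
  have h2 := evalMat_mem hW hA (Lagrange.interpolate s id f)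
  have hEq : Matrix.of (fun x y => (Lagrange.interpolate s id f).eval (A x y))
      = Matrix.of (fun x y => f (A x y)) := by
    ext x y; exact heval x y
  rwa [hEq] at h2

lemma indicator_mem [Nonempty V] (hW : IsCoherentAlgebra F W)
    (c : Matrix V V F → F) :
    ∀ s : Finset (Matrix V V F), (∀ B ∈ s, B ∈ W) →
      Matrix.of (fun x y => if (∀ B ∈ s, B x y = c B) then (1 : F) else 0) ∈ W := by
  intro s
  induction s using Finset.induction_on with
  | empty => intro _; simpa using hW.allOnes_mem
  | @insert a t hat ih =>
    intro hs
    have h1 := funcMat_mem hW (hs a (Finset.mem_insert_self a t))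
      (fun u => if u = c a then (1 : F) else 0)
    have h2 := ih (fun B hB => hs B (Finset.mem_insert_of_mem hB))
    have h3 := hW.hadamard_mem _ _ h1 h2
    have hEq : (Matrix.of (fun x y => if a x y = c a then (1 : F) else 0) ⊙
        Matrix.of (fun x y => if (∀ B ∈ t, B x y = c B) then (1 : F) else 0))
        = Matrix.of (fun x y => if (∀ B ∈ insert a t, B x y = c B) then (1 : F) else 0) := by
      ext x y
      simp only [Matrix.hadamard, Matrix.of_apply, Finset.forall_mem_insert]
      by_cases h1 : a x y = c a <;> by_cases h2 : ∀ B ∈ t, B x y = c B <;>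
        simp [h1, h2]
    rwa [hEq] at h3

lemma cast_card_ne_zero (hchar : ringChar F = 0 ∨ Fintype.card V < ringChar F)
    (m : ℕ) (h1 : 0 < m) (h2 : m ≤ Fintype.card V) : (m : F) ≠ 0 := by
  rcases hchar with h0 | hp
  · haveI : CharP F 0 := h0 ▸ ringChar.charP F
    haveI : CharZero F := CharP.charP_to_charZero F
    exact Nat.cast_ne_zero.mpr (by omega)
  · intro hc
    haveI : CharP F (ringChar F) := ringChar.charP F
    have hdvd := (CharP.cast_eq_zero_iff F (ringChar F) m).mp hc
    have := Nat.le_of_dvd h1 hdvd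
    omega

lemma nondeg [Nonempty V] (hchar : ringChar F = 0 ∨ Fintype.card V < ringChar F)
    (hW : IsCoherentAlgebra F W) {A : Matrix V V F} (hA : A ∈ W) (hA0 : A ≠ 0) :
    ∃ B ∈ W, Matrix.trace (A * B) ≠ 0 := by
  -- a finite generating set of W as an F-module
  have hfg : (Subalgebra.toSubmodule W).FG := IsNoetherian.noetherian _
  obtain ⟨s, hs⟩ := hfg
  have hsW : ∀ B ∈ s, B ∈ W := by
    intro B hB
    have : B ∈ Submodule.span F (↑s : Set (Matrix V V F)) := Submodule.subset_span hB
    rw [hs] at this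
    exact this
  -- matrices in W are constant on colour classes
  have class_eq : ∀ z w x y : V, (∀ B ∈ s, B z w = B x y) →
      ∀ C : Matrix V V F, C ∈ W → C z w = C x y := by
    intro z w x y h C hC
    have hC' : C ∈ Submodule.span F (↑s : Set (Matrix V V F)) := by
      rw [hs]; exact hC
    clear hC
    induction hC' using Submodule.span_induction with
    | mem B hB => exact h B hB
    | zero => simp
    | add B C _ _ ihB ihC => simp [Matrix.add_apply, ihB, ihC]
    | smul r B _ ihB => simp [Matrix.smul_apply, ihB]
  -- a nonzero entry of A
  have hxy : ∃ x y : V, A x y ≠ 0 := by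
    by_contra h
    push_neg at h
    exact hA0 (by ext x y; simpa using h x y)
  obtain ⟨x, y, hAxy⟩ := hxy
  -- the colour-class matrices
  set e : Matrix V V F :=
    Matrix.of (fun z w => if (∀ B ∈ s, B z w = B x y) then (1 : F) else 0) with he_def
  set f : Matrix V V F :=
    Matrix.of (fun z w => if (∀ B ∈ s, B z w = B x x) then (1 : F) else 0) with hf_def
  have he_apply : ∀ z w : V, e z w = if (∀ B ∈ s, B z w = B x y) then (1 : F) else 0 :=
    fun _ _ => rfl
  have hf_apply : ∀ z w : V, f z w = if (∀ B ∈ s, B z w = B x x) then (1 : F) else 0 :=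
    fun _ _ => rfl
  have he : e ∈ W := indicator_mem hW (fun B => B x y) s hsW
  have hf : f ∈ W := indicator_mem hW (fun B => B x x) s hsW
  -- f is supported on the diagonal
  have hf_diag : ∀ z w : V, z ≠ w → f z w = 0 := by
    intro z w hzw
    rw [hf_apply, if_neg]
    intro hcond
    have h1 := class_eq z w x x hcond 1 W.one_mem
    rw [Matrix.one_apply_ne hzw, Matrix.one_apply_eq] at h1
    exact zero_ne_one h1
  -- M = f * e
  have hM : f * e ∈ W := W.mul_mem hf he
  have hM_apply : ∀ z w : V, (f * e) z w = f z z * e z w := by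
    intro z w
    rw [Matrix.mul_apply]
    refine Finset.sum_eq_single z (fun v _ hv => ?_) (fun h => absurd (Finset.mem_univ z) h)
    rw [hf_diag z v (Ne.symm hv), zero_mul]
  -- the first coordinates of the class of (x, y) lie in the fibre of x
  have supp_fiber : ∀ z w : V, (∀ B ∈ s, B z w = B x y) → (∀ B ∈ s, B z z = B x x) := by
    intro z w hzw
    have hMzw : (f * e) z w = (f * e) x y := class_eq z w x y hzw _ hM
    have hfxx : f x x = 1 := by
      rw [hf_apply, if_pos (fun B _ => rfl)]
    have hexy : e x y = 1 := by
      rw [he_apply, if_pos (fun B _ => rfl)]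
    have hezw : e z w = 1 := by
      rw [he_apply, if_pos hzw]
    rw [hM_apply, hM_apply, hfxx, hexy, hezw, mul_one, mul_one] at hMzw
    by_contra hnc
    have : f z z = 0 := by
      rw [hf_apply, if_neg hnc]
    rw [this] at hMzw
    exact zero_ne_one hMzw
  -- N = e * eᵀ has the row sums of e on its diagonal
  have hN : e * eᵀ ∈ W := W.mul_mem he (hW.transpose_mem e he)
  have hN_diag : ∀ z : V, (e * eᵀ) z z = ∑ w : V, e z w := by
    intro z
    rw [Matrix.mul_apply]
    refine Finset.sum_congr rfl (fun w _ => ?_)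
    rw [Matrix.transpose_apply, he_apply z w]
    by_cases h : ∀ B ∈ s, B z w = B x y
    · rw [if_pos h]; norm_num
    · rw [if_neg h]; norm_num
  -- the fibre of x
  set Ω : Finset V := Finset.univ.filter (fun z => ∀ B ∈ s, B z z = B x x) with hΩ_def
  have hxΩ : x ∈ Ω := Finset.mem_filter.mpr ⟨Finset.mem_univ x, fun B _ => rfl⟩
  have row_eq : ∀ z ∈ Ω, (∑ w : V, e z w) = ∑ w : V, e x w := by
    intro z hz
    have hcond := (Finset.mem_filter.mp hz).2
    have := class_eq z z x x hcond _ hN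
    rw [hN_diag, hN_diag] at this
    exact this
  have row_zero : ∀ z ∉ Ω, (∑ w : V, e z w) = 0 := by
    intro z hz
    refine Finset.sum_eq_zero (fun w _ => ?_)
    rw [he_apply, if_neg]
    intro hcond
    exact hz (Finset.mem_filter.mpr ⟨Finset.mem_univ z, supp_fiber z w hcond⟩)
  -- total sum of entries of e
  have hsum : (∑ z : V, ∑ w : V, e z w) = (Ω.card : F) * ∑ w : V, e x w := by
    have h1 : (∑ z : V, ∑ w : V, e z w)
        = ∑ z : V, (if z ∈ Ω then (∑ w : V, e x w) else 0) := by
      refine Finset.sum_congr rfl (fun z _ => ?_)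
      by_cases hz : z ∈ Ω
      · rw [if_pos hz, row_eq z hz]
      · rw [if_neg hz, row_zero z hz]
    rw [h1, Finset.sum_ite_mem, Finset.univ_inter, Finset.sum_const, nsmul_eq_mul]
  -- row sum at x as a cardinality
  set r : Finset V := Finset.univ.filter (fun w => ∀ B ∈ s, B x w = B x y) with hr_def
  have rowx : (∑ w : V, e x w) = (r.card : F) := by
    rw [← Finset.sum_boole]
    rfl
  have hyr : y ∈ r := Finset.mem_filter.mpr ⟨Finset.mem_univ y, fun B _ => rfl⟩
  -- the trace
  have htr : Matrix.trace (A * eᵀ) = A x y * ∑ z : V, ∑ w : V, e z w := by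
    rw [Matrix.trace, Finset.mul_sum]
    refine Finset.sum_congr rfl (fun z _ => ?_)
    rw [Matrix.diag_apply, Matrix.mul_apply, Finset.mul_sum]
    refine Finset.sum_congr rfl (fun w _ => ?_)
    rw [Matrix.transpose_apply]
    by_cases h : ∀ B ∈ s, B z w = B x y
    · have hezw : e z w = 1 := by
        show (if (∀ B ∈ s, B z w = B x y) then (1 : F) else 0) = 1
        rw [if_pos h]
      rw [hezw, class_eq z w x y h A hA]
    · have hezw : e z w = 0 := by
        show (if (∀ B ∈ s, B z w = B x y) then (1 : F) else 0) = 0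
        rw [if_neg h]
      rw [hezw, mul_zero, mul_zero]
  refine ⟨eᵀ, hW.transpose_mem e he, ?_⟩
  rw [htr, hsum, rowx]
  refine mul_ne_zero hAxy (mul_ne_zero ?_ ?_)
  · exact cast_card_ne_zero hchar Ω.card (Finset.card_pos.mpr ⟨x, hxΩ⟩)
      (le_trans (Finset.card_filter_le _ _) Finset.card_univ.le)
  · exact cast_card_ne_zero hchar r.card (Finset.card_pos.mpr ⟨y, hyr⟩)
      (le_trans (Finset.card_filter_le _ _) Finset.card_univ.le)

end Part1


/-- Over a field of characteristic `0` or larger than `|V|`, every coherent algebra on `V`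
is semisimple with respect to matrix multiplication. -/
theorem coherent_algebra_semisimple
    (V : Type) [Fintype V] [DecidableEq V] [Nonempty V] (F : Type) [Field F]
    (hchar : ringChar F = 0 ∨ Fintype.card V < ringChar F)
    (W : Subalgebra F (Matrix V V F)) (hW : IsCoherentAlgebra F W) :
    IsSemisimpleRing W := by
  haveI : FiniteDimensional F W := inferInstance
  refine semisimple_of_trace (F := F) (R := ↥W)
    (fun a => Matrix.trace (a : Matrix V V F)) ?_ ?_
  · rintro ⟨A, hA⟩ ha0
    have hA0 : A ≠ 0 := fun h => ha0 (Subtype.ext h)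
    obtain ⟨B, hB, htr⟩ := nondeg hchar hW hA hA0
    exact ⟨⟨B, hB⟩, htr⟩
  · intro a ha
    have h2 : (a : Matrix V V F) * (a : Matrix V V F) = 0 := by
      have := congrArg (Subtype.val) ha
      simpa using this
    have hnil : IsNilpotent (a : Matrix V V F) := ⟨2, by rw [pow_two, h2]⟩
    exact (Matrix.isNilpotent_trace_of_isNilpotent hnil).eq_zero

end
end

section
/- Let γ ∈ P(V^k) be graph-like and let u, v ∈ V^k satisfy γ(u) = γ(v). Then for every r ≤ k, every i ∈ [k]^(r) and every j ∈ [k]^r, γ(u⟨i, pr_j u⟩) = γ(v⟨i, pr_j v⟩). -/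
open Classical Matrix

noncomputable section

variable {V : Type}

/-- For a graph-like partition, substituting projections of equivalent tuples into
corresponding positions preserves equivalence. -/
theorem graphLike_subst_proj (V : Type) [Fintype V] [Nonempty V] (k : ℕ)
    (γ : Setoid (Tup V k)) (hγ : GraphLike γ) (u v : Tup V k) (huv : γ.r u v)
    (r : ℕ) (hr : r ≤ k) (i : Fin r → Fin k) (hi : Function.Injective i)
    (j : Fin r → Fin k) :
    γ.r (substTup u i (prTup j u)) (substTup v i (prTup j v)) := by
  classical
  set f : Fin k → Fin k := fun p => if h : ∃ s, i s = p then j h.choose else p with hf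
  have hsub : ∀ w : Tup V k, substTup w i (prTup j w) = prTup f w := by
    intro w
    funext p
    simp only [substTup, prTup, hf]
    split_ifs <;> rfl
  have hext : ∀ w : Tup V k, extendTup k w = w := by
    intro w
    funext p
    simp [extendTup, p.isLt]
  have hcons := hγ.2.1 k le_rfl u v huv f
  have := hcons
  have h2 : γ.r (extendTup k (prTup f u)) (extendTup k (prTup f v)) := this
  rw [hsub, hsub, ← hext (prTup f u), ← hext (prTup f v)]
  exact h2

end
end

section
/- For all k, r ∈ ℕ and every nonempty finite set V: (1) if γ ∈ P(V^k) is graph-like, then WL_{k,r}∘γ is graph-like; (2) if k ≥ 2 and γ ∈ P(V^k) is graph-like and WL_{k,r}-stable, then pr_{k-1} γ is WL_{k-1,r}-stable. -/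
open Classical Matrix

noncomputable section

variable {V : Type}

section Aux

variable {V : Type}

theorem substTup_apply_mem {k r : ℕ} (u : Tup V k) {i : Fin r → Fin k}
    (hi : Function.Injective i) (x : Tup V r) (s : Fin r) : substTup u i x (i s) = x s := by
  have h : ∃ s', i s' = i s := ⟨s, rfl⟩
  have hc : h.choose = s := hi h.choose_spec
  simp only [substTup, dif_pos h, hc]

theorem substTup_apply_not_mem {k r : ℕ} (u : Tup V k) {i : Fin r → Fin k}
    (x : Tup V r) {t : Fin k} (ht : ∀ s, i s ≠ t) : substTup u i x t = u t := by
  have h : ¬ ∃ s, i s = t := by push_neg; exact ht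
  simp only [substTup, dif_neg h]

/-- The `γ`-class of `z` as a set. -/
def classSet {k : ℕ} (γ : Setoid (Tup V k)) (z : Tup V k) : Set (Tup V k) := {w | γ.r w z}

theorem classSet_eq_iff {k : ℕ} (γ : Setoid (Tup V k)) {a b : Tup V k} :
    classSet γ a = classSet γ b ↔ γ.r a b := by
  constructor
  · intro h
    have : a ∈ classSet γ a := γ.iseqv.refl a
    rw [h] at this
    exact this
  · intro h
    ext w
    exact ⟨fun hw => γ.iseqv.trans hw h, fun hw => γ.iseqv.trans hw (γ.iseqv.symm h)⟩

theorem permTup_permTup {k : ℕ} (τ : Equiv.Perm (Fin k)) (w : Tup V k) :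
    permTup τ (permTup τ.symm w) = w := by
  funext t
  simp [permTup]

theorem classSet_permTup {k : ℕ} {γ : Setoid (Tup V k)} (hinv : Invariant γ)
    (τ : Equiv.Perm (Fin k)) (z : Tup V k) :
    classSet γ (permTup τ z) = permTup τ '' classSet γ z := by
  ext w
  constructor
  · intro hw
    refine ⟨permTup τ.symm w, ?_, permTup_permTup τ w⟩
    have := hinv _ _ hw τ.symm
    have h2 : permTup τ.symm (permTup τ z) = z := by funext t; simp [permTup]
    rwa [h2] at this
  · rintro ⟨w', hw', rfl⟩
    exact hinv _ _ hw' τ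

theorem extendTup_self [Nonempty V] {k : ℕ} (hk : 0 < k) (w : Tup V k) :
    extendTup k w = w := by
  funext t
  simp only [extendTup, dif_pos t.isLt]

theorem rel_prTup [Nonempty V] {k : ℕ} {γ : Setoid (Tup V k)} (hγ : GraphLike γ)
    {u v : Tup V k} (h : γ.r u v) (J : Fin k → Fin k) :
    γ.r (prTup J u) (prTup J v) := by
  rcases Nat.eq_zero_or_pos k with hk | hk
  · subst hk
    have h1 : prTup J u = u := by funext t; exact t.elim0
    have h2 : prTup J v = v := by funext t; exact t.elim0
    rwa [h1, h2]
  · have := hγ.2.1 k le_rfl u v h J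
    have h' : γ.r (extendTup k (prTup J u)) (extendTup k (prTup J v)) := this
    rwa [extendTup_self hk, extendTup_self hk] at h'

theorem classSet_prTup [Nonempty V] {k : ℕ} {γ : Setoid (Tup V k)} (hγ : GraphLike γ)
    (E : Fin k → Fin k) (z : Tup V k) :
    classSet γ (prTup E z) = {w | ∃ z' ∈ classSet γ z, γ.r w (prTup E z')} := by
  ext w
  constructor
  · intro hw
    exact ⟨z, γ.iseqv.refl z, hw⟩
  · rintro ⟨z', hz', hw⟩
    exact γ.iseqv.trans hw (rel_prTup hγ hz' E)

end Aux

section Counting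

variable {V : Type}

theorem ncard_preimage_transfer {A B : Type*} [Fintype A] (f g : A → B)
    (h : ∀ b : B, {a | f a = b}.ncard = {a | g a = b}.ncard) (S : Set B) :
    (f ⁻¹' S).ncard = (g ⁻¹' S).ncard := by
  classical
  set T : Finset B := Finset.univ.image f ∪ Finset.univ.image g with hT
  have key : ∀ f' : A → B, (∀ a : A, f' a ∈ T) →
      (f' ⁻¹' S).ncard =
        ∑ b ∈ T.filter (· ∈ S), (Finset.univ.filter (fun a => f' a = b)).card := by
    intro f' hf'
    have h1 : (f' ⁻¹' S).ncard = (Finset.univ.filter (fun a => f' a ∈ S)).card := by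
      rw [Set.ncard_eq_toFinset_card']
      congr 1
      ext a
      simp [Set.mem_toFinset]
    rw [h1, Finset.card_eq_sum_card_fiberwise (f := f') (t := T.filter (· ∈ S)) ?_]
    · apply Finset.sum_congr rfl
      intro b hb
      simp only [Finset.mem_filter] at hb
      congr 1
      ext a
      simp only [Finset.mem_filter, Finset.mem_univ, true_and]
      exact ⟨fun h => h.2, fun h => ⟨h ▸ hb.2, h⟩⟩
    · intro a ha
      simp only [Finset.coe_filter, Finset.mem_coe, Finset.mem_filter, Finset.mem_univ, true_and, Set.mem_setOf_eq] at ha ⊢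
      exact ⟨hf' a, ha⟩
  have hfib : ∀ b, (Finset.univ.filter (fun a => f a = b)).card
      = (Finset.univ.filter (fun a => g a = b)).card := by
    intro b
    have := h b
    rwa [Set.ncard_eq_toFinset_card', Set.ncard_eq_toFinset_card',
      Set.toFinset_setOf, Set.toFinset_setOf] at this
  rw [key f (fun a => Finset.mem_union_left _ (Finset.mem_image_of_mem f (Finset.mem_univ a))),
    key g (fun a => Finset.mem_union_right _ (Finset.mem_image_of_mem g (Finset.mem_univ a)))]
  exact Finset.sum_congr rfl fun b _ => hfib b

/-- The complete colour type of `x` relative to `u`. -/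
def theta {k r : ℕ} (γ : Setoid (Tup V k)) (u : Tup V k) (x : Tup V r) :
    {i : Fin r → Fin k // Function.Injective i} → Set (Tup V k) :=
  fun i => classSet γ (substTup u i.1 x)

theorem WLSet_eq_preimage {k r : ℕ} (γ : Setoid (Tup V k)) (u : Tup V k)
    (φ : (Fin r → Fin k) → Tup V k) :
    WLSet γ u φ = theta γ u ⁻¹' {fun i => classSet γ (φ i.1)} := by
  ext x
  simp only [WLSet, Set.mem_setOf_eq, Set.mem_preimage, Set.mem_singleton_iff]
  constructor
  · intro hx
    funext i
    exact (classSet_eq_iff γ).mpr (hx i.1 i.2)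
  · intro hx i hi
    exact (classSet_eq_iff γ).mp (congrFun hx ⟨i, hi⟩)

theorem theta_fiber_ncard [Nonempty V] {k r : ℕ} {γ : Setoid (Tup V k)} {u v : Tup V k}
    (hcnt : ∀ φ : (Fin r → Fin k) → Tup V k, (WLSet γ u φ).ncard = (WLSet γ v φ).ncard)
    (b : {i : Fin r → Fin k // Function.Injective i} → Set (Tup V k)) :
    {x | theta γ u x = b}.ncard = {x | theta γ v x = b}.ncard := by
  classical
  by_cases hb : ∀ i, ∃ z, b i = classSet γ z
  · choose rep hrep using hb
    set φ : (Fin r → Fin k) → Tup V k :=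
      fun i => if h : Function.Injective i then rep ⟨i, h⟩
        else fun _ => Classical.arbitrary V with hφdef
    have hfun : (fun i : {i : Fin r → Fin k // Function.Injective i} =>
        classSet γ (φ i.1)) = b := by
      funext i
      simp only [hφdef, dif_pos i.2]
      exact (hrep ⟨i.1, i.2⟩).symm
    have h1 : ∀ w : Tup V k, {x | theta γ w x = b} = WLSet γ w φ := by
      intro w
      rw [WLSet_eq_preimage, hfun]
      rfl
    rw [h1 u, h1 v]
    exact hcnt φ
  · push_neg at hb
    obtain ⟨i0, hi0⟩ := hb
    have h0 : ∀ w : Tup V k, {x : Tup V r | theta γ w x = b} = ∅ := by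
      intro w
      ext x
      simp only [Set.mem_setOf_eq, Set.mem_empty_iff_false, iff_false]
      intro hx
      exact hi0 (substTup w i0.1 x) (congrFun hx i0).symm
    rw [h0 u, h0 v]

theorem theta_preimage_ncard [Nonempty V] [Fintype V] {k r : ℕ} {γ : Setoid (Tup V k)}
    {u v : Tup V k}
    (hcnt : ∀ φ : (Fin r → Fin k) → Tup V k, (WLSet γ u φ).ncard = (WLSet γ v φ).ncard)
    (S : Set ({i : Fin r → Fin k // Function.Injective i} → Set (Tup V k))) :
    (theta γ u ⁻¹' S).ncard = (theta γ v ⁻¹' S).ncard :=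
  ncard_preimage_transfer _ _ (theta_fiber_ncard hcnt) S

end Counting

section Identities

variable {V : Type}

theorem substTup_permTup {k r : ℕ} (τ : Equiv.Perm (Fin k)) (u : Tup V k)
    {i : Fin r → Fin k} (hi : Function.Injective i) (x : Tup V r) :
    substTup (permTup τ u) i x = permTup τ (substTup u (⇑τ.symm ∘ i) x) := by
  have hi' : Function.Injective (⇑τ.symm ∘ i) := τ.symm.injective.comp hi
  funext t
  show substTup (permTup τ u) i x t = substTup u (⇑τ.symm ∘ i) x (τ.symm t)
  by_cases h : ∃ s, i s = t
  · obtain ⟨s, rfl⟩ := h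
    rw [substTup_apply_mem _ hi, show τ.symm (i s) = (⇑τ.symm ∘ i) s from rfl,
      substTup_apply_mem u hi']
  · push_neg at h
    have h' : ∀ s, (⇑τ.symm ∘ i) s ≠ τ.symm t := fun s hs => h s (τ.symm.injective hs)
    rw [substTup_apply_not_mem u x h', substTup_apply_not_mem _ x h]
    rfl

/-- The map copying coordinate `b` into coordinate `a`. -/
def copyMap {k : ℕ} (a b : Fin k) : Fin k → Fin k := fun t => if t = a then b else t

theorem copy_caseA {k r : ℕ} (a b : Fin k) (u : Tup V k) {i : Fin r → Fin k}
    (ha : ∃ s, i s = a) (x : Tup V r) :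
    substTup (prTup (copyMap a b) u) i x = substTup u i x := by
  funext t
  by_cases ht : ∃ s, i s = t
  · simp only [substTup, dif_pos ht]
  · simp only [substTup, dif_neg ht]
    have hta : t ≠ a := by
      rintro rfl
      obtain ⟨s, hs⟩ := ha
      exact ht ⟨s, hs⟩
    simp [prTup, copyMap, hta]

theorem copy_caseB1 {k r : ℕ} (a b : Fin k) (u : Tup V k) {i : Fin r → Fin k}
    (ha : ∀ s, i s ≠ a) (hb : ∀ s, i s ≠ b) (x : Tup V r) :
    substTup (prTup (copyMap a b) u) i x = prTup (copyMap a b) (substTup u i x) := by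
  funext t
  show substTup (prTup (copyMap a b) u) i x t = substTup u i x (copyMap a b t)
  by_cases hta : t = a
  · rw [hta, substTup_apply_not_mem _ x ha]
    have h1 : copyMap a b a = b := by simp [copyMap]
    rw [h1, substTup_apply_not_mem u x hb]
    simp [prTup, copyMap]
  · have hE : copyMap a b t = t := by simp [copyMap, hta]
    rw [hE]
    by_cases ht : ∃ s, i s = t
    · simp only [substTup, dif_pos ht]
    · simp only [substTup, dif_neg ht]
      simp [prTup, copyMap, hta]

theorem update_inj {k r : ℕ} {i : Fin r → Fin k} (hi : Function.Injective i) {a : Fin k}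
    (ha : ∀ s, i s ≠ a) (s : Fin r) : Function.Injective (Function.update i s a) := by
  intro s1 s2 h12
  by_cases h1 : s1 = s <;> by_cases h2 : s2 = s
  · rw [h1, h2]
  · rw [h1, Function.update_self, Function.update_of_ne h2] at h12
    exact absurd h12.symm (ha s2)
  · rw [h2, Function.update_self, Function.update_of_ne h1] at h12
    exact absurd h12 (ha s1)
  · rw [Function.update_of_ne h1, Function.update_of_ne h2] at h12
    exact hi h12

theorem copy_caseB2 {k r : ℕ} {a b : Fin k} (hab : a ≠ b) (u : Tup V k)
    {i : Fin r → Fin k} (hi : Function.Injective i) (ha : ∀ s', i s' ≠ a) {s : Fin r}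
    (hs : i s = b) (x : Tup V r) :
    substTup (prTup (copyMap a b) u) i x
      = permTup (Equiv.swap a b) (substTup u (Function.update i s a) x) := by
  have hi' : Function.Injective (Function.update i s a) := update_inj hi ha s
  funext t
  have hsymm : (Equiv.swap a b).symm = Equiv.swap a b := Equiv.symm_swap a b
  show substTup (prTup (copyMap a b) u) i x t
      = substTup u (Function.update i s a) x ((Equiv.swap a b).symm t)
  rw [hsymm]
  by_cases hta : t = a
  · rw [hta, Equiv.swap_apply_left, substTup_apply_not_mem _ x ha]
    have hb' : ∀ s', Function.update i s a s' ≠ b := by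
      intro s'
      by_cases h' : s' = s
      · rw [h', Function.update_self]; exact hab
      · rw [Function.update_of_ne h']
        intro hc
        exact h' (hi (hc.trans hs.symm))
    rw [substTup_apply_not_mem u x hb']
    simp [prTup, copyMap]
  · by_cases htb : t = b
    · rw [htb, Equiv.swap_apply_right]
      have h1 : substTup (prTup (copyMap a b) u) i x (i s) = x s :=
        substTup_apply_mem _ hi x s
      rw [hs] at h1
      rw [h1]
      have h2 : substTup u (Function.update i s a) x (Function.update i s a s) = x s :=
        substTup_apply_mem u hi' x s
      rw [Function.update_self] at h2
      rw [h2]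
    · rw [Equiv.swap_apply_of_ne_of_ne hta htb]
      by_cases ht : ∃ s', i s' = t
      · obtain ⟨s', hs'⟩ := ht
        have hss : s' ≠ s := by
          rintro rfl
          exact htb (hs'.symm.trans hs)
        clear htb
        have e1 : substTup (prTup (copyMap a b) u) i x t = x s' := by
          rw [← hs']; exact substTup_apply_mem _ hi x s'
        have e2 : substTup u (Function.update i s a) x t = x s' := by
          have := substTup_apply_mem u hi' x s'
          rwa [Function.update_of_ne hss, hs'] at this
        rw [e1, e2]
      · push_neg at ht
        have ht' : ∀ s', Function.update i s a s' ≠ t := by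
          intro s'
          by_cases h' : s' = s
          · rw [h', Function.update_self]; exact fun hc => hta hc.symm
          · rw [Function.update_of_ne h']; exact ht s'
        rw [substTup_apply_not_mem _ x ht, substTup_apply_not_mem u x ht']
        simp [prTup, copyMap, hta]

end Identities

section Steps

variable {V : Type}

/-- The relation defining `WL_{k,r} ∘ γ`. -/
def WLrel {k : ℕ} (r : ℕ) (γ : Setoid (Tup V k)) (u v : Tup V k) : Prop :=
  γ.r u v ∧ ∀ φ : (Fin r → Fin k) → Tup V k, (WLSet γ u φ).ncard = (WLSet γ v φ).ncard

theorem WLop_rel_iff {k r : ℕ} (γ : Setoid (Tup V k)) (h : r < k) (u v : Tup V k) :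
    (WLop r γ).r u v ↔ WLrel r γ u v := by
  unfold WLop
  rw [if_pos h]
  exact Iff.rfl

theorem WLrel_permTup [Nonempty V] [Fintype V] {k r : ℕ} {γ : Setoid (Tup V k)}
    (hγ : GraphLike γ) {u v : Tup V k} (h : WLrel r γ u v) (τ : Equiv.Perm (Fin k)) :
    WLrel r γ (permTup τ u) (permTup τ v) := by
  obtain ⟨h1, h2⟩ := h
  refine ⟨hγ.1 u v h1 τ, fun φ => ?_⟩
  set S : Set ({i : Fin r → Fin k // Function.Injective i} → Set (Tup V k)) :=
    {c | ∀ i : {i : Fin r → Fin k // Function.Injective i},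
      permTup τ '' (c ⟨⇑τ.symm ∘ i.1, τ.symm.injective.comp i.2⟩) = classSet γ (φ i.1)}
    with hS
  have key : ∀ w : Tup V k, WLSet γ (permTup τ w) φ = theta γ w ⁻¹' S := by
    intro w
    ext x
    simp only [WLSet, Set.mem_setOf_eq, Set.mem_preimage, hS, theta]
    constructor
    · intro hx i
      rw [← classSet_permTup hγ.1, ← substTup_permTup τ w i.2]
      exact (classSet_eq_iff γ).mpr (hx i.1 i.2)
    · intro hx i hi
      apply (classSet_eq_iff γ).mp
      have := hx ⟨i, hi⟩
      rwa [← classSet_permTup hγ.1, ← substTup_permTup τ w hi] at this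
  rw [key u, key v]
  exact theta_preimage_ncard h2 S

/-- The transformation of colour types corresponding to a copy map. -/
def copyCnd {k r : ℕ} (γ : Setoid (Tup V k)) (a b : Fin k)
    (c : {i : Fin r → Fin k // Function.Injective i} → Set (Tup V k))
    (i : {i : Fin r → Fin k // Function.Injective i}) : Set (Tup V k) :=
  if ha : ∃ s, i.1 s = a then c i
  else if hb : ∃ s, i.1 s = b then
    permTup (Equiv.swap a b) ''
      (c ⟨Function.update i.1 hb.choose a,
        update_inj i.2 (fun s hs => ha ⟨s, hs⟩) hb.choose⟩)
  else {w | ∃ z ∈ c i, γ.r w (prTup (copyMap a b) z)}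

theorem WLrel_copyMap [Nonempty V] [Fintype V] {k r : ℕ} {γ : Setoid (Tup V k)}
    (hγ : GraphLike γ) {u v : Tup V k} (h : WLrel r γ u v) {a b : Fin k} (hab : a ≠ b) :
    WLrel r γ (prTup (copyMap a b) u) (prTup (copyMap a b) v) := by
  classical
  obtain ⟨h1, h2⟩ := h
  refine ⟨rel_prTup hγ h1 _, fun φ => ?_⟩
  set S : Set ({i : Fin r → Fin k // Function.Injective i} → Set (Tup V k)) :=
    {c | ∀ i : {i : Fin r → Fin k // Function.Injective i},
      copyCnd γ a b c i = classSet γ (φ i.1)} with hS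
  have key : ∀ w : Tup V k, WLSet γ (prTup (copyMap a b) w) φ = theta γ w ⁻¹' S := by
    intro w
    ext x
    simp only [WLSet, Set.mem_setOf_eq, Set.mem_preimage, hS]
    have cond : ∀ (i : Fin r → Fin k) (hi : Function.Injective i),
        (γ.r (substTup (prTup (copyMap a b) w) i x) (φ i) ↔
          copyCnd γ a b (theta γ w x) ⟨i, hi⟩ = classSet γ (φ i)) := by
      intro i hi
      by_cases hA : ∃ s, i s = a
      · rw [copyCnd, dif_pos hA, copy_caseA a b w hA x]
        exact (classSet_eq_iff γ).symm
      · by_cases hB : ∃ s, i s = b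
        · rw [copyCnd, dif_neg hA, dif_pos hB]
          push_neg at hA
          rw [copy_caseB2 hab w hi hA hB.choose_spec x,
            show (theta γ w x) ⟨Function.update i hB.choose a, _⟩
              = classSet γ (substTup w (Function.update i hB.choose a) x) from rfl,
            ← classSet_permTup hγ.1]
          exact (classSet_eq_iff γ).symm
        · rw [copyCnd, dif_neg hA, dif_neg hB]
          push_neg at hA hB
          rw [copy_caseB1 a b w hA hB x,
            show (theta γ w x) ⟨i, hi⟩ = classSet γ (substTup w i x) from rfl,
            ← classSet_prTup hγ]
          exact (classSet_eq_iff γ).symm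
    exact ⟨fun hx i => (cond i.1 i.2).mp (hx i.1 i.2),
      fun hx i hi => (cond i hi).mpr (hx ⟨i, hi⟩)⟩
  rw [key u, key v]
  exact theta_preimage_ncard h2 S

end Steps

section Factor

variable {V : Type}

theorem WLrel_prTup [Nonempty V] [Fintype V] {k r : ℕ} {γ : Setoid (Tup V k)}
    (hγ : GraphLike γ) :
    ∀ (n : ℕ) (J : Fin k → Fin k), (Finset.univ.filter fun t => J t ≠ t).card ≤ n →
      ∀ u v : Tup V k, WLrel r γ u v → WLrel r γ (prTup J u) (prTup J v) := by
  classical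
  intro n
  induction n with
  | zero =>
    intro J hJ u v h
    have hid : ∀ t, J t = t := by
      intro t
      by_contra ht
      have hmem : t ∈ Finset.univ.filter fun t => J t ≠ t := by simp [ht]
      have := Finset.card_pos.mpr ⟨t, hmem⟩
      omega
    have hw : ∀ w : Tup V k, prTup J w = w := by
      intro w; funext t; simp [prTup, hid t]
    rw [hw u, hw v]
    exact h
  | succ n ih =>
    intro J hJ u v h
    by_cases hinj : Function.Injective J
    · have hbij := Finite.injective_iff_bijective.mp hinj
      set σ := Equiv.ofBijective J hbij with hσ
      have hw : ∀ w : Tup V k, prTup J w = permTup σ.symm w := by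
        intro w; funext t
        simp [prTup, permTup, hσ, Equiv.ofBijective_apply]
      rw [hw u, hw v]
      exact WLrel_permTup hγ h σ.symm
    · have hsurj : ¬ Function.Surjective J := fun hs =>
        hinj (Finite.injective_iff_surjective.mpr hs)
      have hex : ∃ c, ∀ t, J t ≠ c := by
        by_contra hno
        push_neg at hno
        exact hsurj fun b => hno b
      obtain ⟨c, hc⟩ := hex
      have hcc : J c ≠ c := fun h' => hc c h'
      set K := Function.update J c c with hK
      have hJK : ∀ w : Tup V k, prTup J w = prTup K (prTup (copyMap c (J c)) w) := by
        intro w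
        funext t
        simp only [prTup]
        by_cases ht : t = c
        · rw [ht, hK, Function.update_self]
          simp [copyMap]
        · rw [hK, Function.update_of_ne ht]
          have hne : J t ≠ c := hc t
          simp [copyMap, hne]
      have hcard : (Finset.univ.filter fun t => K t ≠ t).card ≤ n := by
        have hsub : (Finset.univ.filter fun t => K t ≠ t)
            ⊆ (Finset.univ.filter fun t => J t ≠ t).erase c := by
          intro t ht
          simp only [Finset.mem_filter, Finset.mem_univ, true_and] at ht
          have htc : t ≠ c := by
            rintro rfl
            rw [hK, Function.update_self] at ht
            exact ht rfl
          rw [hK, Function.update_of_ne htc] at ht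
          exact Finset.mem_erase.mpr ⟨htc, by simp [ht]⟩
        have h1 := Finset.card_le_card hsub
        have h2 : c ∈ Finset.univ.filter fun t => J t ≠ t := by simp [hcc]
        have h3 := Finset.card_erase_of_mem h2
        have h4 := Finset.card_pos.mpr ⟨c, h2⟩
        omega
      rw [hJK u, hJK v]
      exact ih K hcard _ _ (WLrel_copyMap hγ h (Ne.symm hcc))

end Factor

section Part1

variable {V : Type}

theorem part1 [Nonempty V] [Fintype V] {k r : ℕ} {γ : Setoid (Tup V k)}
    (hγ : GraphLike γ) : GraphLike (WLop r γ) := by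
  by_cases hrk : r < k
  · refine ⟨?_, ?_, ?_⟩
    · intro u v h τ
      rw [WLop_rel_iff γ hrk] at h ⊢
      exact WLrel_permTup hγ h τ
    · intro r' hr' u v h j
      rw [WLop_rel_iff γ hrk] at h
      show (WLop r γ).r (extendTup k (prTup j u)) (extendTup k (prTup j v))
      rcases Nat.eq_zero_or_pos r' with h0 | h0
      · have hj : prTup j u = prTup j v := by
          funext t
          exact absurd t.isLt (by omega)
        rw [hj]
      · set J : Fin k → Fin k :=
          fun t => if ht : (t : ℕ) < r' then j ⟨t, ht⟩ else j ⟨r' - 1, by omega⟩ with hJ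
        have hE : ∀ w : Tup V k, extendTup k (prTup j w) = prTup J w := by
          intro w
          funext t
          simp only [extendTup, prTup, hJ]
          split_ifs with h1 <;> rfl
        rw [hE u, hE v, WLop_rel_iff γ hrk]
        exact WLrel_prTup hγ _ J le_rfl u v h
    · intro u v h i j hij
      rw [WLop_rel_iff γ hrk] at h
      exact hγ.2.2 u v h.1 i j hij
  · have heq : WLop r γ = γ := by
      unfold WLop
      rw [if_neg hrk]
    rw [heq]
    exact hγ

end Part1

section Part2

variable {V : Type}

theorem extend_subst_eq [Nonempty V] {k r : ℕ} (hk : 2 ≤ k) (w : Tup V (k-1))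
    {i : Fin r → Fin (k-1)} (hi : Function.Injective i) (x : Tup V r)
    (E : Fin k → Fin k)
    (hE1 : ∀ t : Fin k, (t : ℕ) = k - 1 → (E t : ℕ) = k - 2)
    (hE2 : ∀ t : Fin k, (t : ℕ) ≠ k - 1 → E t = t)
    (ii : Fin r → Fin k) (hii : ∀ s, (ii s : ℕ) = (i s : ℕ)) :
    extendTup k (substTup w i x) = prTup E (substTup (extendTup k w) ii x) := by
  have hiiinj : Function.Injective ii := by
    intro s1 s2 h12
    apply hi
    apply Fin.ext
    rw [← hii s1, ← hii s2, h12]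
  funext t
  show extendTup k (substTup w i x) t = substTup (extendTup k w) ii x (E t)
  by_cases ht : (t : ℕ) < k - 1
  · have hEt : E t = t := hE2 t (by omega)
    rw [hEt]
    have hL : extendTup k (substTup w i x) t = substTup w i x ⟨(t : ℕ), ht⟩ := by
      simp only [extendTup, dif_pos ht]
    rw [hL]
    by_cases hs : ∃ s, i s = ⟨(t : ℕ), ht⟩
    · obtain ⟨s, hs⟩ := hs
      rw [← hs, substTup_apply_mem w hi]
      have hit : ii s = t := by
        apply Fin.ext
        rw [hii s, hs]
      rw [← hit, substTup_apply_mem _ hiiinj]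
    · push_neg at hs
      rw [substTup_apply_not_mem w x hs]
      have hs' : ∀ s, ii s ≠ t := by
        intro s hcon
        apply hs s
        apply Fin.ext
        show ((i s : ℕ)) = (t : ℕ)
        rw [← hii s, hcon]
      rw [substTup_apply_not_mem _ x hs']
      simp only [extendTup, dif_pos ht]
  · have ht' : (t : ℕ) = k - 1 := by
      have := t.isLt
      omega
    have hEt : (E t : ℕ) = k - 2 := hE1 t ht'
    have hk2 : k - 2 < k - 1 := by omega
    have hL : extendTup k (substTup w i x) t = substTup w i x ⟨k - 2, hk2⟩ := by
      simp only [extendTup, dif_neg ht, dif_pos (show 0 < k - 1 by omega)]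
      rfl
    rw [hL]
    by_cases hs : ∃ s, i s = (⟨k - 2, hk2⟩ : Fin (k - 1))
    · obtain ⟨s, hs⟩ := hs
      rw [← hs, substTup_apply_mem w hi]
      have hit : ii s = E t := by
        apply Fin.ext
        rw [hii s, hs, hEt]
      rw [← hit, substTup_apply_mem _ hiiinj]
    · push_neg at hs
      rw [substTup_apply_not_mem w x hs]
      have hs' : ∀ s, ii s ≠ E t := by
        intro s hcon
        apply hs s
        apply Fin.ext
        show ((i s : ℕ)) = k - 2
        rw [← hii s, hcon, hEt]
      rw [substTup_apply_not_mem _ x hs']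
      have hlt : (E t : ℕ) < k - 1 := by omega
      have : extendTup k w (E t) = w ⟨(E t : ℕ), hlt⟩ := by
        simp only [extendTup, dif_pos hlt]
      rw [this]
      congr 1
      apply Fin.ext
      simp only
      omega

end Part2

section Part2b

variable {V : Type}

theorem part2 [Nonempty V] [Fintype V] {k r : ℕ} {γ : Setoid (Tup V k)} (hk : 2 ≤ k)
    (hγ : GraphLike γ) (hst : PartEquiv γ (WLop r γ)) :
    PartEquiv (prPart (k - 1) γ) (WLop r (prPart (k - 1) γ)) := by
  classical
  by_cases hrk : r < k - 1
  · constructor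
    · intro w w' hww
      exact ((WLop_rel_iff _ hrk _ _).mp hww).1
    · intro w w' hww
      rw [WLop_rel_iff _ hrk]
      refine ⟨hww, fun φ => ?_⟩
      have hγrel : γ.r (extendTup k w) (extendTup k w') := hww
      have hwl : WLrel r γ (extendTup k w) (extendTup k w') :=
        (WLop_rel_iff γ (by omega) _ _).mp (hst.2 _ _ hγrel)
      set E : Fin k → Fin k :=
        fun t => if (t : ℕ) = k - 1 then (⟨k - 2, by omega⟩ : Fin k) else t with hEdef
      have hE1 : ∀ t : Fin k, (t : ℕ) = k - 1 → (E t : ℕ) = k - 2 := by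
        intro t ht
        simp only [hEdef, if_pos ht]
      have hE2 : ∀ t : Fin k, (t : ℕ) ≠ k - 1 → E t = t := by
        intro t ht
        simp only [hEdef, if_neg ht]
      set lift : (Fin r → Fin (k - 1)) → (Fin r → Fin k) :=
        fun i s => ⟨(i s : ℕ), by have := (i s).isLt; omega⟩ with hliftdef
      have liftinj : ∀ {i : Fin r → Fin (k - 1)},
          Function.Injective i → Function.Injective (lift i) := by
        intro i hi s1 s2 h12
        apply hi
        have hv := congrArg Fin.val h12
        exact Fin.ext hv
      set S : Set ({i : Fin r → Fin k // Function.Injective i} → Set (Tup V k)) :=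
        {c | ∀ (i : Fin r → Fin (k - 1)) (hi : Function.Injective i),
          {w' | ∃ z ∈ c ⟨lift i, liftinj hi⟩, γ.r w' (prTup E z)}
            = classSet γ (extendTup k (φ i))} with hS
      have key : ∀ w0 : Tup V (k - 1),
          WLSet (prPart (k - 1) γ) w0 φ = theta γ (extendTup k w0) ⁻¹' S := by
        intro w0
        ext x
        simp only [WLSet, Set.mem_setOf_eq, Set.mem_preimage, hS]
        have cond : ∀ (i : Fin r → Fin (k - 1)) (hi : Function.Injective i),
            ((prPart (k - 1) γ).r (substTup w0 i x) (φ i) ↔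
              {w' | ∃ z ∈ theta γ (extendTup k w0) x ⟨lift i, liftinj hi⟩,
                γ.r w' (prTup E z)} = classSet γ (extendTup k (φ i))) := by
          intro i hi
          show γ.r (extendTup k (substTup w0 i x)) (extendTup k (φ i)) ↔ _
          rw [extend_subst_eq hk w0 hi x E hE1 hE2 (lift i) (fun s => rfl),
            show theta γ (extendTup k w0) x ⟨lift i, liftinj hi⟩
              = classSet γ (substTup (extendTup k w0) (lift i) x) from rfl,
            ← classSet_prTup hγ]
          exact (classSet_eq_iff γ).symm
        exact ⟨fun hx i hi => (cond i hi).mp (hx i hi),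
          fun hx i hi => (cond i hi).mpr (hx i hi)⟩
      rw [key w, key w']
      exact theta_preimage_ncard hwl.2 S
  · have heq : WLop r (prPart (k - 1) γ) = prPart (k - 1) γ := by
      unfold WLop
      rw [if_neg hrk]
    rw [heq]
    exact ⟨fun u v h => h, fun u v h => h⟩

end Part2b


/-- `WL_{k,r}` is a graph-like refinement operator, and projections of graph-like
fixed points are fixed points. -/
theorem wl_refinement_procedure (V : Type) [Fintype V] [Nonempty V] (k r : ℕ) :
    (∀ γ : Setoid (Tup V k), GraphLike γ → GraphLike (WLop r γ)) ∧
    (∀ γ : Setoid (Tup V k), 2 ≤ k → GraphLike γ → PartEquiv γ (WLop r γ) →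
      PartEquiv (prPart (k - 1) γ) (WLop r (prPart (k - 1) γ))) :=
  ⟨fun _ hγ => part1 hγ, fun _ hk hγ hst => part2 hk hγ hst⟩

end
end

section
/- For all k, r ∈ ℕ and every nonempty finite set V, if γ ∈ P(V^{k+r}) is graph-like and C_{k+r,r}-stable, then its k-projection pr_k γ is WL_{k,r}-stable. -/
open Classical Matrix

noncomputable section

variable {V : Type}

/-- Auxiliary counting lemma: if two "fiber-count" families agree on every colour class of a
setoid, then they agree on every class-invariant predicate. -/
theorem key_count {α β : Type*} [Fintype α] [Fintype β] (s : Setoid β) (fu fv : α → β)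
    (Pred : β → Prop) (hinv : ∀ b b', s.r b b' → Pred b → Pred b')
    (hcount : ∀ w : β, {x | s.r (fu x) w}.ncard = {x | s.r (fv x) w}.ncard) :
    {x | Pred (fu x)}.ncard = {x | Pred (fv x)}.ncard := by
  classical
  haveI : DecidableEq (Quotient s) := Classical.decEq _
  haveI : Fintype (Quotient s) :=
    Fintype.ofSurjective (Quotient.mk s) (fun q => Quotient.inductionOn q fun b => ⟨b, rfl⟩)
  have hval : ∀ (p : α → Prop) [DecidablePred p],
      {x | p x}.ncard = (Finset.univ.filter p).card := by
    intro p _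
    rw [Set.ncard_eq_toFinset_card']
    congr 1
    ext x
    simp
  rw [hval, hval]
  rw [Finset.card_eq_sum_card_fiberwise (f := fun x => Quotient.mk s (fu x))
      (t := Finset.univ) (fun x _ => Finset.mem_univ _),
    Finset.card_eq_sum_card_fiberwise (f := fun x => Quotient.mk s (fv x))
      (t := Finset.univ) (fun x _ => Finset.mem_univ _)]
  refine Finset.sum_congr rfl fun q _ => ?_
  induction q using Quotient.inductionOn with
  | h w =>
    by_cases hPw : Pred w
    · have e1 : (Finset.univ.filter (fun x => Pred (fu x))).filter
          (fun x => Quotient.mk s (fu x) = Quotient.mk s w)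
          = Finset.univ.filter (fun x => s.r (fu x) w) := by
        ext x
        simp only [Finset.mem_filter, Finset.mem_univ, true_and, Quotient.eq]
        constructor
        · rintro ⟨_, hrel⟩; exact hrel
        · intro hrel; exact ⟨hinv w (fu x) (s.symm hrel) hPw, hrel⟩
      have e2 : (Finset.univ.filter (fun x => Pred (fv x))).filter
          (fun x => Quotient.mk s (fv x) = Quotient.mk s w)
          = Finset.univ.filter (fun x => s.r (fv x) w) := by
        ext x
        simp only [Finset.mem_filter, Finset.mem_univ, true_and, Quotient.eq]
        constructor
        · rintro ⟨_, hrel⟩; exact hrel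
        · intro hrel; exact ⟨hinv w (fv x) (s.symm hrel) hPw, hrel⟩
      rw [e1, e2, ← hval, ← hval]
      exact hcount w
    · have e1 : (Finset.univ.filter (fun x => Pred (fu x))).filter
          (fun x => Quotient.mk s (fu x) = Quotient.mk s w) = ∅ := by
        ext x
        simp only [Finset.mem_filter, Finset.mem_univ, true_and, Quotient.eq,
          Finset.notMem_empty, iff_false, not_and]
        intro hP hrel; exact hPw (hinv (fu x) w hrel hP)
      have e2 : (Finset.univ.filter (fun x => Pred (fv x))).filter
          (fun x => Quotient.mk s (fv x) = Quotient.mk s w) = ∅ := by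
        ext x
        simp only [Finset.mem_filter, Finset.mem_univ, true_and, Quotient.eq,
          Finset.notMem_empty, iff_false, not_and]
        intro hP hrel; exact hPw (hinv (fv x) w hrel hP)
      rw [e1, e2]

/-- The index map realising `extendTup (k+r) (substTup u i x)` as a projection of the
`(k+r)`-tuple `(u, x)`. -/
def Jfun {k r : ℕ} (hk : 0 < k) (i : Fin r → Fin k) (m : Fin (k + r)) : Fin (k + r) :=
  if hm : (m : ℕ) < k then
    (if h : ∃ s, i s = ⟨m, hm⟩ then ⟨k + (h.choose : ℕ), by have := h.choose.isLt; omega⟩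
     else ⟨m, by omega⟩)
  else
    (if h : ∃ s, i s = ⟨k - 1, by omega⟩ then
        ⟨k + (h.choose : ℕ), by have := h.choose.isLt; omega⟩
     else ⟨k - 1, by omega⟩)

/-- The index tuple of the last `r` positions of `[k+r]`. -/
def jlast (k r : ℕ) : Fin r → Fin (k + r) := fun s => ⟨k + s, by have := s.isLt; omega⟩

theorem jlast_inj (k r : ℕ) : Function.Injective (jlast k r) := by
  intro a b hab
  have : k + (a : ℕ) = k + (b : ℕ) := congrArg Fin.val hab
  exact Fin.ext (by omega)

theorem extendTup_full [Nonempty V] {n : ℕ} (t : Tup V n) : extendTup n t = t := by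
  funext m
  simp [extendTup, m.isLt]

theorem subst_proj [Nonempty V] {k r : ℕ} (hk : 0 < k) (u : Tup V k)
    (i : Fin r → Fin k) (x : Tup V r) :
    extendTup (k + r) (substTup u i x)
      = prTup (Jfun hk i) (substTup (extendTup (k + r) u) (jlast k r) x) := by
  funext m
  simp only [prTup]
  by_cases hm : (m : ℕ) < k
  · have hL : extendTup (k + r) (substTup u i x) m = substTup u i x ⟨m, hm⟩ := by
      simp [extendTup, hm]
    rw [hL]
    simp only [substTup]
    by_cases hex : ∃ s, i s = ⟨m, hm⟩
    · rw [dif_pos hex]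
      have hJ : Jfun hk i m = ⟨k + (hex.choose : ℕ), by have := hex.choose.isLt; omega⟩ := by
        simp [Jfun, hm, hex]
      rw [hJ]
      have hex2 : ∃ s, jlast k r s = ⟨k + (hex.choose : ℕ), by have := hex.choose.isLt; omega⟩ :=
        ⟨hex.choose, rfl⟩
      rw [dif_pos hex2]
      congr 1
      have := hex2.choose_spec
      have hval : k + (hex2.choose : ℕ) = k + (hex.choose : ℕ) := congrArg Fin.val this
      exact Fin.ext (by omega)
    · rw [dif_neg hex]
      have hJ : Jfun hk i m = ⟨m, by omega⟩ := by
        simp [Jfun, hm, hex]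
      rw [hJ]
      have hex2 : ¬ ∃ s, jlast k r s = ⟨(m : ℕ), by omega⟩ := by
        rintro ⟨s, hs⟩
        have : k + (s : ℕ) = (m : ℕ) := congrArg Fin.val hs
        omega
      rw [dif_neg hex2]
      simp [extendTup, hm]
  · have hL : extendTup (k + r) (substTup u i x) m = substTup u i x ⟨k - 1, by omega⟩ := by
      simp [extendTup, hm, hk]
    rw [hL]
    simp only [substTup]
    by_cases hex : ∃ s, i s = ⟨k - 1, by omega⟩
    · rw [dif_pos hex]
      have hJ : Jfun hk i m = ⟨k + (hex.choose : ℕ), by have := hex.choose.isLt; omega⟩ := by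
        simp [Jfun, hm, hex]
      rw [hJ]
      have hex2 : ∃ s, jlast k r s = ⟨k + (hex.choose : ℕ), by have := hex.choose.isLt; omega⟩ :=
        ⟨hex.choose, rfl⟩
      rw [dif_pos hex2]
      congr 1
      have := hex2.choose_spec
      have hval : k + (hex2.choose : ℕ) = k + (hex.choose : ℕ) := congrArg Fin.val this
      exact Fin.ext (by omega)
    · rw [dif_neg hex]
      have hJ : Jfun hk i m = ⟨k - 1, by omega⟩ := by
        simp [Jfun, hm, hex]
      rw [hJ]
      have hex2 : ¬ ∃ s, jlast k r s = ⟨k - 1, by omega⟩ := by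
        rintro ⟨s, hs⟩
        have : k + (s : ℕ) = k - 1 := congrArg Fin.val hs
        omega
      rw [dif_neg hex2]
      simp [extendTup, hk, show k - 1 < k by omega]

/-- The `k`-projection of a `C_{k+r,r}`-stable graph-like partition is `WL_{k,r}`-stable. -/
theorem c_stable_proj_wl_stable (V : Type) [Fintype V] [Nonempty V] (k r : ℕ)
    (γ : Setoid (Tup V (k + r))) (hγ : GraphLike γ) (h : CStable r γ) :
    WLStable r (prPart k γ) := by
  intro hr u v huv φ
  have hk : 0 < k := by omega
  set fu : Tup V r → Tup V (k + r) :=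
    fun x => substTup (extendTup (k + r) u) (jlast k r) x with hfu
  set fv : Tup V r → Tup V (k + r) :=
    fun x => substTup (extendTup (k + r) v) (jlast k r) x with hfv
  set Pred : Tup V (k + r) → Prop := fun t => ∀ i : Fin r → Fin k, Function.Injective i →
      γ.r (prTup (Jfun hk i) t) (extendTup (k + r) (φ i)) with hPred
  have hinv : ∀ b b', γ.r b b' → Pred b → Pred b' := by
    intro b b' hbb hPb i hi
    have hc : (prPart (k + r) γ).r (prTup (Jfun hk i) b) (prTup (Jfun hk i) b') :=
      hγ.2.1 (k + r) le_rfl b b' hbb (Jfun hk i)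
    have hc' : γ.r (prTup (Jfun hk i) b) (prTup (Jfun hk i) b') := by
      have h2 : γ.r (extendTup (k + r) (prTup (Jfun hk i) b))
          (extendTup (k + r) (prTup (Jfun hk i) b')) := hc
      rwa [extendTup_full, extendTup_full] at h2
    exact γ.trans (γ.symm hc') (hPb i hi)
  have hset_u : WLSet (prPart k γ) u φ = {x | Pred (fu x)} := by
    ext x
    simp only [WLSet, Set.mem_setOf_eq, hPred]
    constructor <;> intro hx i hi
    · have hx' : γ.r (extendTup (k + r) (substTup u i x))
          (extendTup (k + r) (φ i)) := hx i hi
      rwa [subst_proj hk u i x] at hx'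
    · show γ.r (extendTup (k + r) (substTup u i x)) (extendTup (k + r) (φ i))
      rw [subst_proj hk u i x]
      exact hx i hi
  have hset_v : WLSet (prPart k γ) v φ = {x | Pred (fv x)} := by
    ext x
    simp only [WLSet, Set.mem_setOf_eq, hPred]
    constructor <;> intro hx i hi
    · have hx' : γ.r (extendTup (k + r) (substTup v i x))
          (extendTup (k + r) (φ i)) := hx i hi
      rwa [subst_proj hk v i x] at hx'
    · show γ.r (extendTup (k + r) (substTup v i x)) (extendTup (k + r) (φ i))
      rw [subst_proj hk v i x]
      exact hx i hi
  rw [hset_u, hset_v]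
  exact key_count γ fu fv Pred hinv
    (fun w => h (by omega) (extendTup (k + r) u) (extendTup (k + r) v) huv
      (jlast k r) (jlast_inj k r) w)

end
end
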